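/- arXiv:2012.05972 — 3 statements merged into one kernel-verified Lean document; each statement's English description precedes it below -/
import Mathlib

section
/- Superposition of closable forms: Suppose that for μ̂-almost every y ∈ Y the generalized nonnegative quadratic form Q^y on H is closable. Let (v_j)_{j≥1} be a sequence of strongly measurable functions v_j : Y → H such that for each j, ∫_Y ‖v_j(y)‖²_H dμ̂(y) < ∞ and 𝒬(v_j) < ∞, the functions y ↦ Q^y(v_i(y) − v_j(y)) and y ↦ Q^y(v_j(y)) are μ̂-measurable for all i, j, lim_{i,j→∞} 𝒬(v_i − v_j) = 0, and lim_{j→∞} ∫_Y ‖v_j(y)‖²_H dμ̂(y) = 0. Then lim_{j→∞} 𝒬(v_j) = 0; that is, the superposed quadratic form 𝒬 is closable on L²(Y; H). -/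
open MeasureTheory Filter
open scoped ENNReal
open scoped NNReal

/-- A generalized nonnegative quadratic form on a Hilbert space `H`: an
`[0,∞]`-valued function vanishing at `0`, satisfying the parallelogram law and
homogeneity of degree two. -/
def IsGenQuadraticForm {H : Type*} [NormedAddCommGroup H] [InnerProductSpace ℝ H]
    (Q : H → ℝ≥0∞) : Prop :=
  Q 0 = 0 ∧ (∀ u v : H, Q (u + v) + Q (u - v) = 2 * Q u + 2 * Q v) ∧
    ∀ (c : ℝ) (u : H), c ≠ 0 → Q (c • u) = ENNReal.ofReal (c ^ 2) * Q u

/-- Closability of a generalized nonnegative quadratic form. -/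
def IsClosableForm {H : Type*} [NormedAddCommGroup H] [InnerProductSpace ℝ H]
    (Q : H → ℝ≥0∞) : Prop :=
  ∀ u : ℕ → H,
    Tendsto (fun p : ℕ × ℕ => Q (u p.1 - u p.2)) atTop (nhds 0) →
    Tendsto (fun j => ‖u j‖) atTop (nhds 0) →
    Tendsto (fun j => Q (u j)) atTop (nhds 0)

lemma IsGenQuadraticForm.neg_eq {H : Type*} [NormedAddCommGroup H] [InnerProductSpace ℝ H]
    {Q : H → ℝ≥0∞} (hQ : IsGenQuadraticForm Q) (a : H) : Q (-a) = Q a := by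
  have h := hQ.2.2 (-1) a (by norm_num)
  simpa using h

lemma IsGenQuadraticForm.add_le {H : Type*} [NormedAddCommGroup H] [InnerProductSpace ℝ H]
    {Q : H → ℝ≥0∞} (hQ : IsGenQuadraticForm Q) (a b : H) :
    Q (a + b) ≤ 2 * Q a + 2 * Q b := by
  rw [← hQ.2.1 a b]; exact le_self_add

lemma IsGenQuadraticForm.sub_comm {H : Type*} [NormedAddCommGroup H] [InnerProductSpace ℝ H]
    {Q : H → ℝ≥0∞} (hQ : IsGenQuadraticForm Q) (a b : H) : Q (a - b) = Q (b - a) := by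
  rw [← hQ.neg_eq (b - a), neg_sub]

lemma IsGenQuadraticForm.sub_le {H : Type*} [NormedAddCommGroup H] [InnerProductSpace ℝ H]
    {Q : H → ℝ≥0∞} (hQ : IsGenQuadraticForm Q) (a b c : H) :
    Q (a - c) ≤ 2 * Q (a - b) + 2 * Q (b - c) := by
  have : a - c = (a - b) + (b - c) := by abel
  rw [this]; exact hQ.add_le _ _

/-- Superposition of closable forms: if `μ̂`-a.e. fibre form `Q^y` is closable,
then the superposed form `𝒬(v) = ∫ Q^y(v(y)) dμ̂(y)` is closable on `L²(Y; H)`. -/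
theorem superposition_closable {Y : Type*} [MeasurableSpace Y]
    (μ : Measure Y) [SigmaFinite μ]
    {H : Type*} [NormedAddCommGroup H] [InnerProductSpace ℝ H] [CompleteSpace H]
    [SecondCountableTopology H]
    (Q : Y → H → ℝ≥0∞)
    (hform : ∀ y, IsGenQuadraticForm (Q y))
    (hclosable : ∀ᵐ y ∂μ, IsClosableForm (Q y))
    (v : ℕ → Y → H)
    (hvmeas : ∀ j, StronglyMeasurable (v j))
    (hvL2 : ∀ j, ∫⁻ y, (‖v j y‖₊ : ℝ≥0∞) ^ 2 ∂μ < ⊤)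
    (hvQfin : ∀ j, ∫⁻ y, Q y (v j y) ∂μ < ⊤)
    (hQmeas : ∀ i j, Measurable (fun y => Q y (v i y - v j y)))
    (hQmeas' : ∀ j, Measurable (fun y => Q y (v j y)))
    (hQCauchy : Tendsto (fun p : ℕ × ℕ => ∫⁻ y, Q y (v p.1 y - v p.2 y) ∂μ)
      atTop (nhds 0))
    (hL2zero : Tendsto (fun j => ∫⁻ y, (‖v j y‖₊ : ℝ≥0∞) ^ 2 ∂μ) atTop (nhds 0)) :
    Tendsto (fun j => ∫⁻ y, Q y (v j y) ∂μ) atTop (nhds 0) := by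
  -- Step 1: choose thresholds with geometric control
  have hhalf : ∀ k : ℕ, ∃ N : ℕ,
      (∀ i i', N ≤ i → N ≤ i' → ∫⁻ y, Q y (v i y - v i' y) ∂μ ≤ (8 : ℝ≥0∞)⁻¹ ^ k) ∧
      (∀ i, N ≤ i → ∫⁻ y, (‖v i y‖₊ : ℝ≥0∞) ^ 2 ∂μ ≤ (2 : ℝ≥0∞)⁻¹ ^ k) := by
    intro k
    have h8 : (0 : ℝ≥0∞) < (8 : ℝ≥0∞)⁻¹ ^ k :=
      ENNReal.pow_pos (ENNReal.inv_pos.mpr (by norm_num)) k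
    have h2 : (0 : ℝ≥0∞) < (2 : ℝ≥0∞)⁻¹ ^ k :=
      ENNReal.pow_pos (ENNReal.inv_pos.mpr (by norm_num)) k
    have h1 := ENNReal.tendsto_nhds_zero.mp hQCauchy _ h8
    have h2' := ENNReal.tendsto_nhds_zero.mp hL2zero _ h2
    rw [eventually_atTop] at h1 h2'
    obtain ⟨a, ha⟩ := h1
    obtain ⟨n2, hn2⟩ := h2'
    refine ⟨max (max a.1 a.2) n2, fun i i' hi hi' => ?_, fun i hi => ?_⟩
    · exact ha (i, i') ⟨le_trans (le_trans (le_max_left _ _) (le_max_left _ _)) hi,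
        le_trans (le_trans (le_max_right _ _) (le_max_left _ _)) hi'⟩
    · exact hn2 i (le_trans (le_max_right _ _) hi)
  choose N hN1 hN2 using hhalf
  -- Step 2: the subsequence
  set jseq : ℕ → ℕ := fun k => Nat.rec (N 0) (fun k ih => max (ih + 1) (N (k + 1))) k with hjseq
  have hjsucc : ∀ k, jseq (k + 1) = max (jseq k + 1) (N (k + 1)) := fun k => rfl
  have hjN : ∀ k, N k ≤ jseq k := by
    intro k; cases k with
    | zero => exact le_refl _
    | succ k => rw [hjsucc]; exact le_max_right _ _
  have hjlt : ∀ k, jseq k < jseq (k + 1) := by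
    intro k; rw [hjsucc]; exact lt_of_lt_of_le (Nat.lt_succ_self _) (le_max_left _ _)
  have hjmono : Monotone jseq := monotone_nat_of_le_succ fun k => (hjlt k).le
  have hjge : ∀ k, k ≤ jseq k := by
    intro k; induction k with
    | zero => exact Nat.zero_le _
    | succ k ih => exact Nat.succ_le_of_lt (lt_of_le_of_lt ih (hjlt k))
  have hQk : ∀ k, ∫⁻ y, Q y (v (jseq k) y - v (jseq (k + 1)) y) ∂μ ≤ (8 : ℝ≥0∞)⁻¹ ^ k :=
    fun k => hN1 k _ _ (hjN k) (le_trans (hjN k) (hjmono (Nat.le_succ k)))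
  have hL2k : ∀ k, ∫⁻ y, (‖v (jseq k) y‖₊ : ℝ≥0∞) ^ 2 ∂μ ≤ (2 : ℝ≥0∞)⁻¹ ^ k :=
    fun k => hN2 k _ (hjN k)
  -- geometric series facts
  have hgeo : ∑' k : ℕ, (2 : ℝ≥0∞)⁻¹ ^ k < ⊤ := by
    rw [ENNReal.tsum_geometric]
    refine ENNReal.inv_lt_top.mpr ?_
    rw [tsub_pos_iff_lt]
    exact ENNReal.inv_lt_one.mpr (by norm_num)
  have h48 : (4 : ℝ≥0∞) * (8 : ℝ≥0∞)⁻¹ = (2 : ℝ≥0∞)⁻¹ := by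
    rw [show (8 : ℝ≥0∞) = 4 * 2 by norm_num,
      ENNReal.mul_inv (Or.inl (by norm_num)) (Or.inl (by norm_num)), ← mul_assoc,
      ENNReal.mul_inv_cancel (by norm_num) (by norm_num), one_mul]
  -- Step 3: a.e. finiteness of the dominating series
  set S : Y → ℝ≥0∞ :=
    fun y => ∑' k : ℕ, 4 ^ k * Q y (v (jseq k) y - v (jseq (k + 1)) y) with hS
  have hSmeas : Measurable S :=
    Measurable.ennreal_tsum fun k => (hQmeas _ _).const_mul _
  have hSint : ∫⁻ y, S y ∂μ < ⊤ := by
    rw [hS, lintegral_tsum fun k => ((hQmeas _ _).const_mul _).aemeasurable]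
    calc ∑' k : ℕ, ∫⁻ y, 4 ^ k * Q y (v (jseq k) y - v (jseq (k + 1)) y) ∂μ
        = ∑' k : ℕ, 4 ^ k * ∫⁻ y, Q y (v (jseq k) y - v (jseq (k + 1)) y) ∂μ := by
          congr 1; funext k; exact lintegral_const_mul _ (hQmeas _ _)
      _ ≤ ∑' k : ℕ, (2 : ℝ≥0∞)⁻¹ ^ k := by
          refine ENNReal.tsum_le_tsum fun k => ?_
          calc (4 : ℝ≥0∞) ^ k * ∫⁻ y, Q y (v (jseq k) y - v (jseq (k + 1)) y) ∂μ
              ≤ 4 ^ k * (8 : ℝ≥0∞)⁻¹ ^ k := mul_le_mul_right (hQk k) _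
            _ = (2 : ℝ≥0∞)⁻¹ ^ k := by rw [← mul_pow, h48]
      _ < ⊤ := hgeo
  have hSae : ∀ᵐ y ∂μ, S y < ⊤ := ae_lt_top hSmeas hSint.ne
  set T : Y → ℝ≥0∞ := fun y => ∑' k : ℕ, (‖v (jseq k) y‖₊ : ℝ≥0∞) ^ 2 with hT
  have hTmeas : Measurable T :=
    Measurable.ennreal_tsum fun k => (hvmeas _).nnnorm.measurable.coe_nnreal_ennreal.pow_const 2
  have hTint : ∫⁻ y, T y ∂μ < ⊤ := by
    rw [hT, lintegral_tsum fun k => ((hvmeas _).nnnorm.measurable.coe_nnreal_ennreal.pow_const 2).aemeasurable]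
    exact lt_of_le_of_lt (ENNReal.tsum_le_tsum fun k => hL2k k) hgeo
  have hTae : ∀ᵐ y ∂μ, T y < ⊤ := ae_lt_top hTmeas hTint.ne
  -- Step 4: pointwise telescoping bound
  have tele : ∀ y k d, Q y (v (jseq k) y - v (jseq (k + d)) y) ≤
      ∑ m ∈ Finset.range d, 2 ^ (m + 1) * Q y (v (jseq (k + m)) y - v (jseq (k + m + 1)) y) := by
    intro y k d
    induction d generalizing k with
    | zero => simp [(hform y).1]
    | succ d ih =>
      have h1 := (hform y).sub_le (v (jseq k) y) (v (jseq (k + 1)) y) (v (jseq (k + (d + 1))) y)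
      refine le_trans h1 ?_
      have h2 := ih (k + 1)
      rw [show k + 1 + d = k + (d + 1) from by omega] at h2
      calc 2 * Q y (v (jseq k) y - v (jseq (k + 1)) y) +
            2 * Q y (v (jseq (k + 1)) y - v (jseq (k + (d + 1))) y)
          ≤ 2 * Q y (v (jseq k) y - v (jseq (k + 1)) y) +
            2 * ∑ m ∈ Finset.range d,
              2 ^ (m + 1) * Q y (v (jseq (k + 1 + m)) y - v (jseq (k + 1 + m + 1)) y) :=
            add_le_add_right (mul_le_mul_right h2 _) _
        _ = (∑ m ∈ Finset.range d,
              2 * (2 ^ (m + 1) * Q y (v (jseq (k + 1 + m)) y - v (jseq (k + 1 + m + 1)) y))) +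
            2 * Q y (v (jseq k) y - v (jseq (k + 1)) y) := by
            rw [Finset.mul_sum, add_comm]
        _ = ∑ m ∈ Finset.range (d + 1),
              2 ^ (m + 1) * Q y (v (jseq (k + m)) y - v (jseq (k + m + 1)) y) := by
            rw [Finset.sum_range_succ']
            congr 1
            · refine Finset.sum_congr rfl fun i _ => ?_
              rw [show k + 1 + i = k + (i + 1) from by omega, ← mul_assoc, ← pow_succ']
            · simp
  -- Step 5: a.e. convergence along subsequence
  have key : ∀ y, S y ≠ ⊤ → ∀ k d : ℕ,
      Q y (v (jseq k) y - v (jseq (k + d)) y) ≤ 2 * (2 : ℝ≥0∞)⁻¹ ^ k * S y := by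
    intro y hSy k d
    refine le_trans (tele y k d) ?_
    calc ∑ m ∈ Finset.range d, 2 ^ (m + 1) * Q y (v (jseq (k + m)) y - v (jseq (k + m + 1)) y)
        ≤ ∑ m ∈ Finset.range d, 2 * (2 : ℝ≥0∞)⁻¹ ^ k *
            (4 ^ (k + m) * Q y (v (jseq (k + m)) y - v (jseq (k + m + 1)) y)) := by
          refine Finset.sum_le_sum fun m _ => ?_
          rw [← mul_assoc]
          refine mul_le_mul_left ?_ _
          have h2k : (2 : ℝ≥0∞)⁻¹ ^ k * 2 ^ k = 1 := by
            rw [← ENNReal.inv_pow]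
            exact ENNReal.inv_mul_cancel (pow_ne_zero k (by norm_num))
              (ENNReal.pow_ne_top (by norm_num))
          have h4 : (4 : ℝ≥0∞) ^ (k + m) = 2 ^ k * 2 ^ (k + 2 * m) := by
            rw [show (4 : ℝ≥0∞) = 2 ^ 2 by norm_num, ← pow_mul, ← pow_add]
            congr 1
            omega
          calc (2 : ℝ≥0∞) ^ (m + 1) ≤ 2 ^ (k + 2 * m + 1) :=
              pow_le_pow_right₀ (by norm_num) (by omega)
            _ = 2 * (2 : ℝ≥0∞)⁻¹ ^ k * 4 ^ (k + m) := by
              rw [h4, show 2 * (2 : ℝ≥0∞)⁻¹ ^ k * (2 ^ k * 2 ^ (k + 2 * m)) =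
                (2 : ℝ≥0∞)⁻¹ ^ k * 2 ^ k * (2 * 2 ^ (k + 2 * m)) by ring, h2k, one_mul,
                ← pow_succ']
      _ = 2 * (2 : ℝ≥0∞)⁻¹ ^ k * ∑ m ∈ Finset.range d,
            4 ^ (k + m) * Q y (v (jseq (k + m)) y - v (jseq (k + m + 1)) y) := by
          rw [Finset.mul_sum]
      _ ≤ 2 * (2 : ℝ≥0∞)⁻¹ ^ k * S y := by
          refine mul_le_mul_right ?_ _
          calc ∑ m ∈ Finset.range d,
                4 ^ (k + m) * Q y (v (jseq (k + m)) y - v (jseq (k + m + 1)) y)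
              ≤ ∑' m : ℕ, 4 ^ (k + m) * Q y (v (jseq (k + m)) y - v (jseq (k + m + 1)) y) :=
                ENNReal.sum_le_tsum _
            _ ≤ S y := ENNReal.tsum_comp_le_tsum_of_injective
                (add_right_injective k) _
  have hae : ∀ᵐ y ∂μ, Tendsto (fun k => Q y (v (jseq k) y)) atTop (nhds 0) := by
    filter_upwards [hclosable, hSae, hTae] with y hcl hSy hTy
    refine hcl (fun k => v (jseq k) y) ?_ ?_
    · -- Q-Cauchy pointwise
      rw [ENNReal.tendsto_nhds_zero]
      intro ε hε
      have hlim : Tendsto (fun k : ℕ => 2 * (2 : ℝ≥0∞)⁻¹ ^ k * S y) atTop (nhds 0) := by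
        have h0 : Tendsto (fun k : ℕ => (2 : ℝ≥0∞)⁻¹ ^ k) atTop (nhds 0) :=
          ENNReal.tendsto_pow_atTop_nhds_zero_of_lt_one (ENNReal.inv_lt_one.mpr (by norm_num))
        have h1 := ENNReal.Tendsto.mul_const h0 (Or.inr hSy.ne)
        have h2 := ENNReal.Tendsto.const_mul h1 (Or.inr (by norm_num : (2:ℝ≥0∞) ≠ ⊤))
        simpa [mul_assoc] using h2
      have hev := ENNReal.tendsto_nhds_zero.mp hlim ε hε
      rw [eventually_atTop] at hev
      obtain ⟨K, hK⟩ := hev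
      rw [eventually_atTop]
      refine ⟨(K, K), fun p hp => ?_⟩
      obtain ⟨hp1, hp2⟩ := hp
      rcases le_total p.1 p.2 with h | h
      · obtain ⟨d, hd⟩ := Nat.exists_eq_add_of_le h
        rw [hd]
        exact le_trans (key y hSy.ne p.1 d) (hK p.1 hp1)
      · obtain ⟨d, hd⟩ := Nat.exists_eq_add_of_le h
        rw [(hform y).sub_comm, hd]
        exact le_trans (key y hSy.ne p.2 d) (hK p.2 hp2)
    · -- norms tend to zero
      have hterm : Tendsto (fun k => ((‖v (jseq k) y‖₊ : ℝ≥0∞)) ^ 2) atTop (nhds 0) :=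
        ENNReal.tendsto_atTop_zero_of_tsum_ne_top hTy.ne
      have hterm' : Tendsto (fun k => ((‖v (jseq k) y‖₊ ^ 2 : ℝ≥0) : ℝ≥0∞)) atTop (nhds 0) := by
        simpa [ENNReal.coe_pow] using hterm
      rw [← ENNReal.coe_zero] at hterm'
      have hnn : Tendsto (fun k => (‖v (jseq k) y‖₊ ^ 2 : ℝ≥0)) atTop (nhds 0) :=
        ENNReal.tendsto_coe.mp hterm'
      have hnn' : Tendsto (fun k => ‖v (jseq k) y‖₊) atTop (nhds 0) := by
        have h := (NNReal.continuous_sqrt.tendsto 0).comp hnn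
        rw [NNReal.sqrt_zero] at h
        exact h.congr fun k => by simp [Function.comp, NNReal.sqrt_sq]
      have := (NNReal.continuous_coe.tendsto 0).comp hnn'
      exact this
  -- Step 6: conclusion
  rw [ENNReal.tendsto_nhds_zero]
  intro ε hε
  have hε2 : (0 : ℝ≥0∞) < ε / 2 := ENNReal.div_pos hε.ne' (by norm_num)
  have hev := ENNReal.tendsto_nhds_zero.mp hQCauchy _ hε2
  rw [eventually_atTop] at hev
  obtain ⟨a, ha⟩ := hev
  rw [eventually_atTop]
  refine ⟨max a.1 a.2, fun j hj => ?_⟩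
  have step1 : ∀ᵐ y ∂μ, Q y (v j y) ≤
      liminf (fun k => 2 * Q y (v j y - v (jseq k) y)) atTop := by
    filter_upwards [hae] with y hy
    set L := liminf (fun k => 2 * Q y (v j y - v (jseq k) y)) atTop with hL
    by_cases hLtop : L = ⊤
    · rw [hLtop]; exact le_top
    refine ENNReal.le_of_forall_pos_le_add fun δ hδ _ => ?_
    have hδ2 : (0 : ℝ≥0∞) < (δ : ℝ≥0∞) / 2 :=
      ENNReal.div_pos (by exact_mod_cast hδ.ne') (by norm_num)
    have hev2 := ENNReal.tendsto_nhds_zero.mp hy _ hδ2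
    have hbound : ∀ᶠ k in atTop, Q y (v j y) - (δ : ℝ≥0∞) ≤
        2 * Q y (v j y - v (jseq k) y) := by
      filter_upwards [hev2] with k hk
      rw [tsub_le_iff_right]
      have hsplit : Q y (v j y) ≤
          2 * Q y (v j y - v (jseq k) y) + 2 * Q y (v (jseq k) y) := by
        have := (hform y).add_le (v j y - v (jseq k) y) (v (jseq k) y)
        rwa [sub_add_cancel] at this
      refine le_trans hsplit (add_le_add_right ?_ _)
      calc 2 * Q y (v (jseq k) y) ≤ 2 * ((δ : ℝ≥0∞) / 2) := mul_le_mul_right hk _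
        _ = (δ : ℝ≥0∞) := ENNReal.mul_div_cancel' (by norm_num) (by norm_num)
    have : Q y (v j y) - (δ : ℝ≥0∞) ≤ L := by
      calc Q y (v j y) - (δ : ℝ≥0∞)
          = liminf (fun _ : ℕ => Q y (v j y) - (δ : ℝ≥0∞)) atTop := (liminf_const _).symm
        _ ≤ L := liminf_le_liminf hbound
    rwa [tsub_le_iff_right] at this
  calc ∫⁻ y, Q y (v j y) ∂μ
      ≤ ∫⁻ y, liminf (fun k => 2 * Q y (v j y - v (jseq k) y)) atTop ∂μ :=
        lintegral_mono_ae step1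
    _ ≤ liminf (fun k => ∫⁻ y, 2 * Q y (v j y - v (jseq k) y) ∂μ) atTop :=
        lintegral_liminf_le fun k => (hQmeas j (jseq k)).const_mul 2
    _ ≤ ε := by
        have hevk : ∀ᶠ k in atTop, ∫⁻ y, 2 * Q y (v j y - v (jseq k) y) ∂μ ≤ ε := by
          rw [eventually_atTop]
          refine ⟨a.2, fun k hk => ?_⟩
          rw [lintegral_const_mul 2 (hQmeas j (jseq k))]
          have hja : ∫⁻ y, Q y (v j y - v (jseq k) y) ∂μ ≤ ε / 2 :=
            ha (j, jseq k) ⟨le_trans (le_max_left _ _) hj, le_trans hk (hjge k)⟩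
          calc 2 * ∫⁻ y, Q y (v j y - v (jseq k) y) ∂μ ≤ 2 * (ε / 2) :=
              mul_le_mul_right hja _
            _ ≤ ε := by
              rcases eq_or_ne ε ⊤ with h | h
              · simp [h]
              · rw [ENNReal.mul_div_cancel' (by norm_num) (by norm_num)]
        calc liminf (fun k => ∫⁻ y, 2 * Q y (v j y - v (jseq k) y) ∂μ) atTop
            ≤ liminf (fun _ : ℕ => ε) atTop := liminf_le_liminf hevk
          _ = ε := liminf_const _
end

section
/- Closability of the weighted Dirichlet integral (Euclidean case): Let (φ_j)_{j≥1} be a sequence in C_c¹(U) such that lim_{i,j→∞} ∫_U |∇φ_i(x) − ∇φ_j(x)|² dμ(x) = 0 and lim_{j→∞} ∫_U φ_j(x)² dμ(x) = 0. Then lim_{j→∞} ∫_U |∇φ_j(x)|² dμ(x) = 0; that is, the weighted Dirichlet integral D^{(μ)}(φ) = ∫_U |∇φ|² dμ on C_c¹(U) is closable on L²(U, μ). -/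
open MeasureTheory Filter InnerProductSpace
open scoped ENNReal RealInnerProductSpace

section Aux
variable {α : Type*} [MeasurableSpace α] {F : Type*} [NormedAddCommGroup F]

lemma aux_lintegral_sq (μ : Measure α) (f : α → F) :
    ∫⁻ x, (‖f x‖₊ : ℝ≥0∞) ^ 2 ∂μ = (eLpNorm f 2 μ) ^ 2 := by
  rw [eLpNorm_eq_lintegral_rpow_enorm_toReal (two_ne_zero) (ENNReal.ofNat_ne_top)]
  rw [← ENNReal.rpow_natCast _ 2, ← ENNReal.rpow_mul]
  norm_num
  rfl

lemma aux_tendsto_eLpNorm {ι : Type*} {l : Filter ι} (μ : Measure α) (f : ι → α → F)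
    (h : Tendsto (fun j => ∫⁻ x, (‖f j x‖₊ : ℝ≥0∞) ^ 2 ∂μ) l (nhds 0)) :
    Tendsto (fun j => eLpNorm (f j) 2 μ) l (nhds 0) := by
  have h2 := h.ennrpow_const (1/2 : ℝ)
  simp only [ENNReal.zero_rpow_of_pos (by norm_num : (0:ℝ) < 1/2)] at h2
  convert h2 using 2 with j
  rw [aux_lintegral_sq, ← ENNReal.rpow_natCast _ 2, ← ENNReal.rpow_mul]
  norm_num

lemma aux_tendsto_lintegral {ι : Type*} {l : Filter ι} (μ : Measure α) (f : ι → α → F)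
    (h : Tendsto (fun j => eLpNorm (f j) 2 μ) l (nhds 0)) :
    Tendsto (fun j => ∫⁻ x, (‖f j x‖₊ : ℝ≥0∞) ^ 2 ∂μ) l (nhds 0) := by
  have h2 : Tendsto (fun j => (eLpNorm (f j) 2 μ)^2) l (nhds 0) := by
    have := ((ENNReal.continuous_pow 2).tendsto 0).comp h
    simpa [Function.comp_def] using this
  simpa only [aux_lintegral_sq] using h2

end Aux


variable {E : Type*} [NormedAddCommGroup E] [InnerProductSpace ℝ E] [CompleteSpace E]

lemma aux_gradient_cont {f : E → ℝ} (hf : ContDiff ℝ 1 f) : Continuous (gradient f) := by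
  have : gradient f = fun x => (toDual ℝ E).symm (fderiv ℝ f x) := rfl
  rw [this]
  exact (toDual ℝ E).symm.continuous.comp (hf.continuous_fderiv one_ne_zero)

lemma aux_gradient_supp {f : E → ℝ} (hsupp : HasCompactSupport f) :
    HasCompactSupport (gradient f) := by
  have : gradient f = (fun L => (toDual ℝ E).symm L) ∘ (fderiv ℝ f) := rfl
  rw [this]
  exact (hsupp.fderiv ℝ).comp_left (by simp)

lemma aux_gradient_inner (f : E → ℝ) (x v : E) : ⟪gradient f x, v⟫ = fderiv ℝ f x v := by
  exact toDual_symm_apply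

lemma aux_gradient_supp_subset {f : E → ℝ} :
    tsupport (gradient f) ⊆ tsupport f := by
  have : gradient f = (fun L => (toDual ℝ E).symm L) ∘ (fderiv ℝ f) := rfl
  rw [this]
  refine (closure_mono ?_).trans (tsupport_fderiv_subset ℝ)
  apply Function.support_comp_subset (by simp)


section Aux2
variable {α : Type*} [MeasurableSpace α] {F : Type*} [NormedAddCommGroup F] [NormedSpace ℝ F]

lemma aux_half_half : (1:ℝ≥0∞)/1 = 1/2 + 1/2 := by
  rw [ENNReal.div_add_div_same, one_add_one_eq_two, ENNReal.div_self two_ne_zero ENNReal.ofNat_ne_top, div_one]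

lemma aux_eLpNorm_le_smul {μ ν : Measure α} {c : ℝ≥0∞} (h : ν ≤ c • μ) (f : α → F) :
    eLpNorm f 2 ν ≤ c ^ (1/2:ℝ) * eLpNorm f 2 μ := by
  calc eLpNorm f 2 ν ≤ eLpNorm f 2 (c • μ) := eLpNorm_mono_measure f h
  _ = c ^ (1/2:ℝ) * eLpNorm f 2 μ := by
      rw [eLpNorm_smul_measure_of_ne_top (ENNReal.ofNat_ne_top) f c, smul_eq_mul]
      norm_num

lemma aux_squeeze_toReal {c : ℝ≥0∞} (hc : c ≠ ∞) {X : ℕ → ℝ≥0∞} (hX : Tendsto X atTop (nhds 0))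
    {a : ℕ → ℝ} (ha : ∀ j, 0 ≤ a j) (hb : ∀ j, a j ≤ (c * X j).toReal) :
    Tendsto a atTop (nhds 0) := by
  have h2 := ENNReal.Tendsto.const_mul hX (Or.inr hc)
  rw [mul_zero] at h2
  have h1 : Tendsto (fun j => (c * X j).toReal) atTop (nhds 0) := by
    have h3 := (ENNReal.tendsto_toReal (ENNReal.zero_ne_top)).comp h2
    rw [ENNReal.toReal_zero] at h3
    exact h3
  exact tendsto_of_tendsto_of_tendsto_of_le_of_le tendsto_const_nhds h1 ha hb

lemma aux_tendsto_eLpNorm_of_le {μ ν : Measure α} {c : ℝ≥0∞} (hc : c ≠ ∞) (h : ν ≤ c • μ)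
    {f : ℕ → α → F} (hf : Tendsto (fun j => eLpNorm (f j) 2 μ) atTop (nhds 0)) :
    Tendsto (fun j => eLpNorm (f j) 2 ν) atTop (nhds 0) := by
  have hc2 : c ^ (1/2:ℝ) ≠ ∞ := ENNReal.rpow_ne_top_of_nonneg (by norm_num) hc
  have h2 := ENNReal.Tendsto.const_mul hf (Or.inr hc2)
  rw [mul_zero] at h2
  exact tendsto_of_tendsto_of_tendsto_of_le_of_le tendsto_const_nhds h2
    (fun j => zero_le) (fun j => aux_eLpNorm_le_smul h (f j))

lemma aux_integral_smul_bound (ν : Measure α) (w : α → ℝ) (h : α → F)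
    (hw : AEStronglyMeasurable w ν) (hh : AEStronglyMeasurable h ν)
    (hwf : eLpNorm w 2 ν ≠ ∞) (hhf : eLpNorm h 2 ν ≠ ∞) :
    ‖∫ x, w x • h x ∂ν‖ ≤ (eLpNorm w 2 ν * eLpNorm h 2 ν).toReal := by
  have h1 : (‖∫ x, w x • h x ∂ν‖₊ : ℝ≥0∞) ≤ eLpNorm w 2 ν * eLpNorm h 2 ν := by
    calc (‖∫ x, w x • h x ∂ν‖₊ : ℝ≥0∞) ≤ ∫⁻ x, ‖w x • h x‖₊ ∂ν :=
      enorm_integral_le_lintegral_enorm _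
    _ = eLpNorm (fun x => w x • h x) 1 ν := (eLpNorm_one_eq_lintegral_enorm (f := fun x => w x • h x)).symm
    _ ≤ eLpNorm w 2 ν * eLpNorm h 2 ν := eLpNorm_smul_le_mul_eLpNorm hh hw
  calc ‖∫ x, w x • h x ∂ν‖ = ((‖∫ x, w x • h x ∂ν‖₊ : ℝ≥0∞)).toReal := by simp
  _ ≤ (eLpNorm w 2 ν * eLpNorm h 2 ν).toReal :=
      ENNReal.toReal_mono (ENNReal.mul_ne_top hwf hhf) h1

end Aux2
/-- Closability of the weighted Dirichlet integral on an open set `U ⊆ ℝⁿ`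
with a Borel density bounded and bounded away from zero. -/
theorem weighted_dirichlet_integral_closable {n : ℕ}
    (U : Set (EuclideanSpace ℝ (Fin n))) (hU : IsOpen U)
    (ρ : EuclideanSpace ℝ (Fin n) → ℝ) (hρmeas : Measurable ρ)
    (K : ℝ) (hK : 1 ≤ K) (hρ : ∀ x, K⁻¹ ≤ ρ x ∧ ρ x ≤ K)
    (μ : Measure (EuclideanSpace ℝ (Fin n)))
    (hμ : μ = (volume.restrict U).withDensity (fun x => ENNReal.ofReal (ρ x)))
    (φ : ℕ → EuclideanSpace ℝ (Fin n) → ℝ)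
    (hφ : ∀ j, ContDiff ℝ 1 (φ j) ∧ HasCompactSupport (φ j) ∧ tsupport (φ j) ⊆ U)
    (hgradCauchy : Tendsto
      (fun p : ℕ × ℕ =>
        ∫⁻ x, (‖gradient (φ p.1) x - gradient (φ p.2) x‖₊ : ℝ≥0∞) ^ 2 ∂μ)
      atTop (nhds 0))
    (hL2 : Tendsto (fun j => ∫⁻ x, ENNReal.ofReal ((φ j x) ^ 2) ∂μ) atTop (nhds 0)) :
    Tendsto (fun j => ∫⁻ x, (‖gradient (φ j) x‖₊ : ℝ≥0∞) ^ 2 ∂μ) atTop (nhds 0) := by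
  classical
  have hK0 : (0:ℝ) < K := lt_of_lt_of_le one_pos hK
  set ν : Measure (EuclideanSpace ℝ (Fin n)) := volume.restrict U with hνdef
  set g : ℕ → EuclideanSpace ℝ (Fin n) → EuclideanSpace ℝ (Fin n) := fun j => gradient (φ j) with hgdef
  have hρae : Measurable fun x : EuclideanSpace ℝ (Fin n) => ENNReal.ofReal (ρ x) := hρmeas.ennreal_ofReal
  have hKne : (ENNReal.ofReal K) ≠ ∞ := ENNReal.ofReal_ne_top
  -- measure comparison
  have hμapp : ∀ s : Set (EuclideanSpace ℝ (Fin n)), MeasurableSet s → μ s = ∫⁻ x in s, ENNReal.ofReal (ρ x) ∂ν := by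
    intro s hs; rw [hμ, withDensity_apply _ hs]
  have hνμ : ν ≤ (ENNReal.ofReal K) • μ := by
    refine Measure.le_iff.2 fun s hs => ?_
    rw [Measure.smul_apply, smul_eq_mul, hμapp s hs, ← lintegral_const_mul _ hρmeas.ennreal_ofReal]
    calc ν s = ∫⁻ _ in s, 1 ∂ν := (setLIntegral_one s).symm
    _ ≤ ∫⁻ x in s, ENNReal.ofReal K * ENNReal.ofReal (ρ x) ∂ν := by
        refine lintegral_mono fun x => ?_
        rw [← ENNReal.ofReal_mul hK0.le]
        rw [show (1:ℝ≥0∞) = ENNReal.ofReal 1 by simp]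
        apply ENNReal.ofReal_le_ofReal
        calc (1:ℝ) = K * K⁻¹ := by field_simp
        _ ≤ K * ρ x := by
            apply mul_le_mul_of_nonneg_left (hρ x).1 hK0.le
  have hμν : μ ≤ (ENNReal.ofReal K) • ν := by
    refine Measure.le_iff.2 fun s hs => ?_
    rw [Measure.smul_apply, smul_eq_mul, hμapp s hs]
    calc ∫⁻ x in s, ENNReal.ofReal (ρ x) ∂ν ≤ ∫⁻ _ in s, ENNReal.ofReal K ∂ν :=
      lintegral_mono fun x => ENNReal.ofReal_le_ofReal (hρ x).2
    _ = ENNReal.ofReal K * ν s := by rw [setLIntegral_const]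
  -- finiteness instances
  have hfin : IsFiniteMeasureOnCompacts μ := by
    constructor
    intro k hk
    calc μ k ≤ (ENNReal.ofReal K • ν) k := hμν k
    _ = ENNReal.ofReal K * ν k := by rw [Measure.smul_apply, smul_eq_mul]
    _ ≤ ENNReal.ofReal K * volume k := by
        gcongr
        exact Measure.restrict_le_self
    _ < ∞ := ENNReal.mul_lt_top hKne.lt_top hk.measure_lt_top
  haveI := hfin
  haveI : IsFiniteMeasureOnCompacts ν := by
    constructor
    intro k hk
    exact lt_of_le_of_lt (Measure.restrict_le_self k) hk.measure_lt_top
  haveI : IsLocallyFiniteMeasure ν := by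
    constructor
    intro x
    exact ⟨Metric.ball x 1, Metric.ball_mem_nhds x one_pos,
      lt_of_le_of_lt (Measure.restrict_le_self _) measure_ball_lt_top⟩
  -- gradient facts
  have hgcont : ∀ j, Continuous (g j) := fun j => aux_gradient_cont (hφ j).1
  have hgcs : ∀ j, HasCompactSupport (g j) := fun j => aux_gradient_supp (hφ j).2.1
  have hgmem : ∀ j, MemLp (g j) 2 μ :=
    fun j => (hgcont j).memLp_of_hasCompactSupport (hgcs j)
  have hφmem : ∀ j, MemLp (φ j) 2 μ :=
    fun j => (hφ j).1.continuous.memLp_of_hasCompactSupport (hφ j).2.1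
  -- Cauchy sequence in L²(μ)
  set Fj : ℕ → Lp (EuclideanSpace ℝ (Fin n)) 2 μ := fun j => (hgmem j).toLp (g j) with hFdef
  have hcauchy : CauchySeq Fj := by
    rw [Lp.cauchySeq_Lp_iff_cauchySeq_eLpNorm]
    have h1 : Tendsto (fun p : ℕ × ℕ => eLpNorm (g p.1 - g p.2) 2 μ) atTop (nhds 0) :=
      aux_tendsto_eLpNorm μ (fun p : ℕ × ℕ => g p.1 - g p.2) hgradCauchy
    refine Tendsto.congr (fun p => ?_) h1
    exact eLpNorm_congr_ae (((hgmem p.1).coeFn_toLp.symm).sub ((hgmem p.2).coeFn_toLp.symm))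
  obtain ⟨G, hG⟩ := cauchySeq_tendsto_of_complete hcauchy
  have hGmem : MemLp (⇑G) 2 μ := Lp.memLp G
  have hGconv : Tendsto (fun j => eLpNorm (g j - ⇑G) 2 μ) atTop (nhds 0) := by
    have h2 := (Lp.tendsto_Lp_iff_tendsto_eLpNorm' Fj G).1 hG
    refine Tendsto.congr (fun j => ?_) h2
    exact eLpNorm_congr_ae (((hgmem j).coeFn_toLp).sub (Filter.EventuallyEq.refl _ _))
  -- L² facts over ν
  have hGmemν : MemLp (⇑G) 2 ν := (hGmem.smul_measure hKne).mono_measure hνμ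
  have hgmemν : ∀ j, MemLp (g j) 2 ν :=
    fun j => (hgcont j).memLp_of_hasCompactSupport (hgcs j)
  have hφmemν : ∀ j, MemLp (φ j) 2 ν :=
    fun j => (hφ j).1.continuous.memLp_of_hasCompactSupport (hφ j).2.1
  have hGconvν : Tendsto (fun j => eLpNorm (g j - ⇑G) 2 ν) atTop (nhds 0) :=
    aux_tendsto_eLpNorm_of_le hKne hνμ hGconv
  have hφL2μ : Tendsto (fun j => eLpNorm (φ j) 2 μ) atTop (nhds 0) := by
    apply aux_tendsto_eLpNorm μ φ
    refine Tendsto.congr (fun j => ?_) hL2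
    apply lintegral_congr fun x => ?_
    rw [← sq_abs, ENNReal.ofReal_pow (abs_nonneg _), ← Real.enorm_eq_ofReal_abs]
    rfl
  have hφL2ν : Tendsto (fun j => eLpNorm (φ j) 2 ν) atTop (nhds 0) :=
    aux_tendsto_eLpNorm_of_le hKne hνμ hφL2μ
  -- G vanishes a.e.
  have hGzero : ⇑G =ᵐ[μ] 0 := by
    have hloc : LocallyIntegrableOn (⇑G) U volume :=
      locallyIntegrableOn_of_locallyIntegrable_restrict (hGmemν.locallyIntegrable one_le_two)
    have h0 : ∀ᵐ x ∂(volume : Measure (EuclideanSpace ℝ (Fin n))), x ∈ U → (⇑G) x = 0 := by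
      apply hU.ae_eq_zero_of_integral_contDiff_smul_eq_zero hloc
      intro ψ hψs hψc hψU
      have hψ1 : ContDiff ℝ 1 ψ := hψs.of_le (by exact_mod_cast le_top)
      have hψcont : Continuous ψ := hψ1.continuous
      have hψmemν : MemLp ψ 2 ν := hψcont.memLp_of_hasCompactSupport hψc
      have hgψcont : Continuous (gradient ψ) := aux_gradient_cont hψ1
      have hgψcs : HasCompactSupport (gradient ψ) := aux_gradient_supp hψc
      have hgψmemν : MemLp (gradient ψ) 2 ν := hgψcont.memLp_of_hasCompactSupport hgψcs
      -- restriction identities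
      have hrestrψ : ∀ h : EuclideanSpace ℝ (Fin n) → EuclideanSpace ℝ (Fin n),
          ∫ x, ψ x • h x ∂ν = ∫ x, ψ x • h x ∂(volume : Measure (EuclideanSpace ℝ (Fin n))) := by
        intro h
        apply setIntegral_eq_integral_of_forall_compl_eq_zero
        intro x hx
        have : ψ x = 0 := image_eq_zero_of_notMem_tsupport (fun hc => hx (hψU hc))
        rw [this, zero_smul]
      have hrestrφ : ∀ j, ∫ x, φ j x • gradient ψ x ∂ν
          = ∫ x, φ j x • gradient ψ x ∂(volume : Measure (EuclideanSpace ℝ (Fin n))) := by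
        intro j
        apply setIntegral_eq_integral_of_forall_compl_eq_zero
        intro x hx
        have : φ j x = 0 := image_eq_zero_of_notMem_tsupport (fun hc => hx ((hφ j).2.2 hc))
        rw [this, zero_smul]
      -- integrability
      have hGint : Integrable (fun x => ψ x • (⇑G) x) ν :=
        memLp_one_iff_integrable.1 (hGmemν.smul hψmemν)
      have hgjint : ∀ j, Integrable (fun x => ψ x • g j x) ν := fun j =>
        memLp_one_iff_integrable.1 ((hgmemν j).smul hψmemν)
      -- Step (ii): ∫ ψ • g j ∂ν → ∫ ψ • G ∂ν
      have hlim1 : Tendsto (fun j => ∫ x, ψ x • g j x ∂ν) atTop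
          (nhds (∫ x, ψ x • (⇑G) x ∂ν)) := by
        rw [tendsto_iff_dist_tendsto_zero]
        refine aux_squeeze_toReal hψmemν.2.ne hGconvν (fun j => dist_nonneg) (fun j => ?_)
        rw [dist_eq_norm, ← integral_sub (hgjint j) hGint]
        have heq : (fun x => ψ x • g j x - ψ x • (⇑G) x)
            = fun x => ψ x • (g j x - (⇑G) x) := by
          funext x; rw [smul_sub]
        rw [heq]
        exact aux_integral_smul_bound ν ψ _ hψmemν.1 ((hgmemν j).sub hGmemν).1
          hψmemν.2.ne ((hgmemν j).sub hGmemν).2.ne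
      -- Step (iii): integration by parts and ∫ ψ • g j ∂ν → 0
      have hIBP : ∀ j, ∫ x, ψ x • g j x ∂(volume : Measure (EuclideanSpace ℝ (Fin n)))
          = - ∫ x, φ j x • gradient ψ x ∂(volume : Measure (EuclideanSpace ℝ (Fin n))) := by
        intro j
        have hint1 : Integrable (fun x => ψ x • g j x)
            (volume : Measure (EuclideanSpace ℝ (Fin n))) :=
          (hψcont.smul (hgcont j)).integrable_of_hasCompactSupport hψc.smul_right
        have hint2 : Integrable (fun x => φ j x • gradient ψ x)
            (volume : Measure (EuclideanSpace ℝ (Fin n))) :=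
          ((hφ j).1.continuous.smul hgψcont).integrable_of_hasCompactSupport
            (hφ j).2.1.smul_right
        apply ext_inner_right ℝ
        intro v
        have hdiffψ : Differentiable ℝ ψ := hψ1.differentiable one_ne_zero
        have hdiffφ : Differentiable ℝ (φ j) := (hφ j).1.differentiable one_ne_zero
        have hfdψcont : Continuous fun x => fderiv ℝ ψ x v :=
          (hψ1.continuous_fderiv one_ne_zero).clm_apply continuous_const
        have hfdφcont : Continuous fun x => fderiv ℝ (φ j) x v :=
          ((hφ j).1.continuous_fderiv one_ne_zero).clm_apply continuous_const
        have hd1 : Integrable (fun x => fderiv ℝ ψ x v * φ j x)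
            (volume : Measure (EuclideanSpace ℝ (Fin n))) :=
          (hfdψcont.mul (hφ j).1.continuous).integrable_of_hasCompactSupport
            ((hφ j).2.1.mul_left)
        have hd2 : Integrable (fun x => ψ x * fderiv ℝ (φ j) x v)
            (volume : Measure (EuclideanSpace ℝ (Fin n))) :=
          (hψcont.mul hfdφcont).integrable_of_hasCompactSupport (hψc.mul_right)
        have hd3 : Integrable (fun x => ψ x * φ j x)
            (volume : Measure (EuclideanSpace ℝ (Fin n))) :=
          (hψcont.mul (hφ j).1.continuous).integrable_of_hasCompactSupport (hψc.mul_right)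
        have hA : ∀ x, ⟪v, ψ x • g j x⟫ = ψ x * fderiv ℝ (φ j) x v := by
          intro x
          rw [inner_smul_right, real_inner_comm, aux_gradient_inner]
        have hB : ∀ x, ⟪v, φ j x • gradient ψ x⟫ = φ j x * fderiv ℝ ψ x v := by
          intro x
          rw [inner_smul_right, real_inner_comm, aux_gradient_inner]
        calc ⟪∫ x, ψ x • g j x ∂(volume : Measure (EuclideanSpace ℝ (Fin n))), v⟫
            = ∫ x, ψ x * fderiv ℝ (φ j) x v ∂(volume : Measure (EuclideanSpace ℝ (Fin n))) := by
              rw [real_inner_comm, ← integral_inner hint1 v]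
              exact integral_congr_ae (Filter.Eventually.of_forall hA)
        _ = - ∫ x, fderiv ℝ ψ x v * φ j x ∂(volume : Measure (EuclideanSpace ℝ (Fin n))) :=
              integral_mul_fderiv_eq_neg_fderiv_mul_of_integrable hd1 hd2 hd3 (fun x _ => hdiffψ x) (fun x _ => hdiffφ x)
        _ = ⟪- ∫ x, φ j x • gradient ψ x ∂(volume : Measure (EuclideanSpace ℝ (Fin n))), v⟫ := by
              rw [inner_neg_left, real_inner_comm, ← integral_inner hint2 v, neg_inj]
              refine integral_congr_ae (Filter.Eventually.of_forall fun x => ?_)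
              exact (mul_comm _ _).trans (hB x).symm
      -- Step (iii) conclusion: ∫ ψ • g j ∂ν → 0
      have hlim2 : Tendsto (fun j => ∫ x, ψ x • g j x ∂ν) atTop (nhds 0) := by
        have h5 : Tendsto (fun j => ∫ x, φ j x • gradient ψ x ∂ν) atTop (nhds 0) := by
          rw [tendsto_zero_iff_norm_tendsto_zero]
          refine aux_squeeze_toReal hgψmemν.2.ne hφL2ν (fun j => norm_nonneg _) (fun j => ?_)
          rw [mul_comm]
          exact aux_integral_smul_bound ν (φ j) _ (hφmemν j).1 hgψmemν.1
            (hφmemν j).2.ne hgψmemν.2.ne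
        have h6 := h5.neg
        rw [neg_zero] at h6
        refine h6.congr fun j => ?_
        rw [hrestrψ (g j), hIBP j, hrestrφ j]
      have hfinal : ∫ x, ψ x • (⇑G) x ∂ν = 0 := tendsto_nhds_unique hlim1 hlim2
      rw [← hrestrψ (⇑G)]
      exact hfinal
    have h1 : ⇑G =ᵐ[ν] 0 := (ae_restrict_iff' hU.measurableSet).2 h0
    have habs : μ ≪ ν := by
      rw [hμ]
      exact withDensity_absolutelyContinuous ν _
    exact habs.ae_eq h1
  -- conclusion
  apply aux_tendsto_lintegral μ g
  refine Tendsto.congr (fun j => ?_) hGconv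
  apply eLpNorm_congr_ae
  filter_upwards [hGzero] with x hx
  simp [hx]
end

section
/- Invariance of a topological attractor: Let X be a compact Hausdorff topological space, f : X → X a continuous map, and U ⊆ X an open set such that the closure of f(U) is contained in U. Define Λ := ⋂_{n ≥ 0} f^n(U), where f^n(U) denotes the image of U under the n-th iterate of f. Then f(Λ) = Λ. -/
/-- Invariance of a topological attractor: if `U` is a trapping region
(`closure (f '' U) ⊆ U`), then `Λ = ⋂ n, f^[n] '' U` satisfies `f(Λ) = Λ`. -/
theorem attractor_invariant {X : Type*} [TopologicalSpace X] [CompactSpace X] [T2Space X]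
    (f : X → X) (hf : Continuous f) (U : Set X) (hU : IsOpen U)
    (htrap : closure (f '' U) ⊆ U) :
    f '' (⋂ n : ℕ, f^[n] '' U) = ⋂ n : ℕ, f^[n] '' U := by
  set A : ℕ → Set X := fun n => f^[n] '' U with hA
  have hfU : f '' U ⊆ U := (subset_closure).trans htrap
  have hAsucc : ∀ n, A (n + 1) = f^[n] '' (f '' U) := by
    intro n
    simp only [hA, Function.iterate_succ, Set.image_comp]
  have hAsucc' : ∀ n, A (n + 1) = f '' (A n) := by
    intro n
    simp only [hA, Function.iterate_succ', Set.image_comp]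
  have hAsub : ∀ n, A (n + 1) ⊆ A n := fun n => by
    rw [hAsucc n]; exact Set.image_mono hfU
  -- closure of A (n+1) is inside A n
  have hBA : ∀ n, closure (A (n + 1)) ⊆ A n := by
    intro n
    have hcomp : IsCompact (f^[n] '' closure (f '' U)) :=
      (isClosed_closure.isCompact).image (hf.iterate n)
    have hclosed : IsClosed (f^[n] '' closure (f '' U)) := hcomp.isClosed
    have h1 : A (n + 1) ⊆ f^[n] '' closure (f '' U) := by
      rw [hAsucc n]; exact Set.image_mono subset_closure
    calc closure (A (n + 1)) ⊆ f^[n] '' closure (f '' U) :=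
          closure_minimal h1 hclosed
      _ ⊆ f^[n] '' U := Set.image_mono htrap
  apply Set.Subset.antisymm
  · rintro x ⟨y, hy, rfl⟩
    simp only [Set.mem_iInter] at hy ⊢
    intro n
    have : f y ∈ A (n + 1) := by
      rw [hAsucc' n]; exact Set.mem_image_of_mem f (hy n)
    exact hAsub n this
  · intro x hx
    simp only [Set.mem_iInter] at hx
    set C : ℕ → Set X := fun n => f ⁻¹' {x} ∩ closure (A n) with hC
    have hCne : ∀ n, (C n).Nonempty := by
      intro n
      have : x ∈ A (n + 1) := hx (n + 1)
      rw [hAsucc' n] at this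
      obtain ⟨y, hy, hyx⟩ := this
      exact ⟨y, by simp [hC, hyx], subset_closure hy⟩
    have hCdec : ∀ n, C (n + 1) ⊆ C n := by
      intro n
      exact Set.inter_subset_inter_right _
        (closure_mono (hAsub n))
    have hCclosed : ∀ n, IsClosed (C n) :=
      fun n => (IsClosed.preimage hf isClosed_singleton).inter isClosed_closure
    have hCcomp : IsCompact (C 0) := (hCclosed 0).isCompact
    obtain ⟨y, hy⟩ := IsCompact.nonempty_iInter_of_sequence_nonempty_isCompact_isClosed
      C hCdec hCne hCcomp hCclosed
    simp only [Set.mem_iInter, hC, Set.mem_inter_iff, Set.mem_preimage,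
      Set.mem_singleton_iff] at hy
    refine ⟨y, ?_, (hy 0).1⟩
    simp only [Set.mem_iInter]
    intro n
    exact hBA n (hy (n + 1)).2
end
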